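/- For all X, Y, Z, W ∈ V: −(R̄(X,Y)·S̄)(Z,W) = −(R(X,Y)·S)(Z,W) + Q(g,S̄)(Z,W;X,Y) + [S(X,Z) − (n−2)g(X,Z)]·π(Y)π(W) − [S(Y,Z) − (n−2)g(Y,Z)]·π(X)π(W) + [S(X,W) − (n−2)g(X,W)]·π(Y)π(Z) − [S(Y,W) − (n−2)g(Y,W)]·π(X)π(Z). -/
import Mathlib


open scoped RealInnerProductSpace

/-- In the algebraic setting of an inner product space `V` of dimension `n ≥ 3`,
with unit vector `P`, `π(X) = g(X,P)`, `AX = −π(X)P + ½X`, a curvature-like trilinear map `R`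
with `R(X,Y)P = 0`, a symmetric bilinear form `S` with `S(X,P) = 0`,
`S̄(Y,Z) = S(Y,Z) + (n−2)π(Y)π(Z) − (n−2)g(Y,Z)` and
`R̄(X,Y)Z = R(X,Y)Z + g(AX,Z)Y − g(AY,Z)X + g(X,Z)AY − g(Y,Z)AX`, one has for all `X,Y,Z,W`:
`−(R̄(X,Y)·S̄)(Z,W) = −(R(X,Y)·S)(Z,W) + Q(g,S̄)(Z,W;X,Y)
  + [S(X,Z) − (n−2)g(X,Z)]π(Y)π(W) − [S(Y,Z) − (n−2)g(Y,Z)]π(X)π(W)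
  + [S(X,W) − (n−2)g(X,W)]π(Y)π(Z) − [S(Y,W) − (n−2)g(Y,W)]π(X)π(Z)`. -/
theorem statement13 {V : Type*} [NormedAddCommGroup V] [InnerProductSpace ℝ V]
    [FiniteDimensional ℝ V] (n : ℕ) (hn : n = Module.finrank ℝ V) (h3 : 3 ≤ n)
    (P : V) (hP : ⟪P, P⟫ = 1)
    (A : V → V) (hA : ∀ X : V, A X = -(⟪X, P⟫) • P + (2⁻¹ : ℝ) • X)
    (R : V →ₗ[ℝ] V →ₗ[ℝ] V →ₗ[ℝ] V)
    (hR1 : ∀ X Y Z W : V, ⟪R X Y Z, W⟫ = -⟪R Y X Z, W⟫)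
    (hR2 : ∀ X Y Z W : V, ⟪R X Y Z, W⟫ = -⟪R X Y W, Z⟫)
    (hR3 : ∀ X Y Z W : V, ⟪R X Y Z, W⟫ = ⟪R Z W X, Y⟫)
    (hRP : ∀ X Y : V, R X Y P = 0)
    (S : V →ₗ[ℝ] V →ₗ[ℝ] ℝ) (hSsymm : ∀ X Y : V, S X Y = S Y X)
    (hSP : ∀ X : V, S X P = 0)
    (Sbar : V → V → ℝ)
    (hSbar : ∀ Y Z : V, Sbar Y Z =
      S Y Z + ((n : ℝ) - 2) * (⟪Y, P⟫ * ⟪Z, P⟫) - ((n : ℝ) - 2) * ⟪Y, Z⟫)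
    (Rbar : V → V → V → V)
    (hRbar : ∀ X Y Z : V, Rbar X Y Z =
      R X Y Z + ⟪A X, Z⟫ • Y - ⟪A Y, Z⟫ • X + ⟪X, Z⟫ • A Y - ⟪Y, Z⟫ • A X) :
    ∀ X Y Z W : V,
      -(-(Sbar (Rbar X Y Z) W) - Sbar Z (Rbar X Y W)) =
        -(-(S (R X Y Z) W) - S Z (R X Y W))
          + (-(Sbar (⟪Y, Z⟫ • X - ⟪X, Z⟫ • Y) W) - Sbar Z (⟪Y, W⟫ • X - ⟪X, W⟫ • Y))
          + (S X Z - ((n : ℝ) - 2) * ⟪X, Z⟫) * (⟪Y, P⟫ * ⟪W, P⟫)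
          - (S Y Z - ((n : ℝ) - 2) * ⟪Y, Z⟫) * (⟪X, P⟫ * ⟪W, P⟫)
          + (S X W - ((n : ℝ) - 2) * ⟪X, W⟫) * (⟪Y, P⟫ * ⟪Z, P⟫)
          - (S Y W - ((n : ℝ) - 2) * ⟪Y, W⟫) * (⟪X, P⟫ * ⟪Z, P⟫) := by
  intro X Y Z W
  have hRZP : ∀ X Y Z : V, ⟪R X Y Z, P⟫ = 0 := by
    intro X Y Z
    rw [hR2, hRP, inner_zero_left, neg_zero]
  have hSP' : ∀ X : V, S P X = 0 := fun X => (hSsymm P X).trans (hSP X)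
  simp only [hSbar, hRbar, hA, inner_add_left, inner_add_right, inner_sub_left,
    inner_sub_right, inner_smul_left, inner_smul_right, inner_neg_left, inner_neg_right,
    map_add, map_sub, map_smul, map_neg, LinearMap.add_apply, LinearMap.sub_apply,
    LinearMap.smul_apply, LinearMap.neg_apply, smul_eq_mul, RCLike.ofReal_real_eq_id, id_eq,
    hRZP, hSP, hSP', hP, inner_zero_left, inner_zero_right, starRingEnd_apply, star_trivial]
  have h2 := hR2 X Y Z W
  have c1 : ⟪Z, X⟫ = ⟪X, Z⟫ := real_inner_comm _ _
  have c2 : ⟪Z, Y⟫ = ⟪Y, Z⟫ := real_inner_comm _ _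
  have c3 : ⟪W, X⟫ = ⟪X, W⟫ := real_inner_comm _ _
  have c4 : ⟪W, Y⟫ = ⟪Y, W⟫ := real_inner_comm _ _
  have c5 : ⟪P, X⟫ = ⟪X, P⟫ := real_inner_comm _ _
  have c6 : ⟪P, Y⟫ = ⟪Y, P⟫ := real_inner_comm _ _
  have c7 : ⟪P, Z⟫ = ⟪Z, P⟫ := real_inner_comm _ _
  have c8 : ⟪P, W⟫ = ⟪W, P⟫ := real_inner_comm _ _
  have s1 : S Z X = S X Z := hSsymm _ _
  have s2 : S Z Y = S Y Z := hSsymm _ _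
  have s3 : S W X = S X W := hSsymm _ _
  have s4 : S W Y = S Y W := hSsymm _ _
  have c9 : ⟪Z, R X Y W⟫ = ⟪R X Y W, Z⟫ := real_inner_comm _ _
  simp only [c9, c1, c2, c3, c4, c5, c6, c7, c8, s1, s2, s3, s4]
  linear_combination (2-(n:ℝ)) * h2
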